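/- Let 0 < α ≤ β < 1 and let n ≥ 1 be an integer. Then A_n(α,β,1) > |A_n(α,β,−1)|. Moreover, if α < β then A_n(α,β,−1) = Γ(n−α+β)/(Γ(β−α)·n!) ≥ 0, where Γ is the Gamma function. -/

import Mathlib

open Real MeasureTheory Set Finset

noncomputable section

/-- Generalized binomial coefficient `C(α,k) = (∏_{j=0}^{k-1} (α-j)) / k!`. -/
def genBinom (α : ℝ) (k : ℕ) : ℝ :=
  (∏ j ∈ Finset.range k, (α - j)) / (Nat.factorial k)

/-- Ascending Pochhammer symbol `(a)_k = a (a+1) ⋯ (a+k-1)`. -/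
def pochh (a : ℝ) (k : ℕ) : ℝ := ∏ j ∈ Finset.range k, (a + j)

/-- `A_n(α,β,ω)`, the `n`-th Maclaurin coefficient of `(1+ωz)^α (1-z)^(-β)`. -/
def brA (α β : ℝ) (ω : ℂ) (n : ℕ) : ℂ :=
  ∑ k ∈ Finset.range (n + 1),
    ((genBinom α k * (pochh β (n - k) / Nat.factorial (n - k)) : ℝ) : ℂ) * ω ^ k

/-- `A_n(α,β,x)` for real `x` (real-valued version). -/
def brAR (α β x : ℝ) (n : ℕ) : ℝ :=
  ∑ k ∈ Finset.range (n + 1),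
    genBinom α k * (pochh β (n - k) / Nat.factorial (n - k)) * x ^ k

/-- `w_n(α,β,x)` for complex `x`. -/
def wC (α β : ℝ) (n : ℕ) (x : ℂ) : ℂ :=
  ((Real.Gamma (n - α) * Real.Gamma (1 + α) * Real.sin (π * α) / Nat.factorial n : ℝ) : ℂ) *
    ∑ k ∈ Finset.range (n + 1),
      ((pochh β k * pochh (-(n : ℝ)) k / (pochh (α - n + 1) k * Nat.factorial k) : ℝ) : ℂ) * x ^ k

/-- `w_n(α,β,x)` for real `x` (real-valued version). -/
def wR (α β : ℝ) (n : ℕ) (x : ℝ) : ℝ :=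
  (Real.Gamma (n - α) * Real.Gamma (1 + α) * Real.sin (π * α) / Nat.factorial n) *
    ∑ k ∈ Finset.range (n + 1),
      pochh β k * pochh (-(n : ℝ)) k / (pochh (α - n + 1) k * Nat.factorial k) * x ^ k

/-- `R(s,φ) = √(e^{2s} + 1 - 2 e^s cos φ)`. -/
def Rker (s φ : ℝ) : ℝ := Real.sqrt (Real.exp (2 * s) + 1 - 2 * Real.exp s * Real.cos φ)

/-- `I₁(α,β,φ;n)`. -/
def brI1 (α β φ : ℝ) (n : ℕ) : ℝ :=
  ((π - φ) ^ 2)⁻¹ *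
    ∫ s in Set.Ioi (0 : ℝ),
      (Real.exp s - 1) ^ (-β) * ((Real.exp s + 1) ^ α - Rker s φ ^ α) * Real.exp (-(n : ℝ) * s)

/-- `I₂(α,β,φ;n)`. -/
def brI2 (α β φ : ℝ) (n : ℕ) : ℝ :=
  ((π - φ) ^ 2)⁻¹ *
    ∫ s in Set.Ioi (0 : ℝ),
      (Real.exp s - 1) ^ α * ((Real.exp s + 1) ^ (-β) - Rker s φ ^ (-β)) * Real.exp (-(n : ℝ) * s)

/-- `h(α,β,φ;n)`. -/
def hFun (α β φ : ℝ) (n : ℕ) : ℝ :=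
  Real.sin (π * β) * brI1 α β φ n + Real.sin (π * α) * brI2 α β φ n

/-- `C₁(α,φ)`. -/
def C1f (α φ : ℝ) : ℝ :=
  ((π - φ) ^ 2)⁻¹ * ((2 : ℝ) ^ α - (2 * Real.sin (φ / 2)) ^ α)

/-- `C₂(β,φ)`. -/
def C2f (β φ : ℝ) : ℝ :=
  ((π - φ) ^ 2)⁻¹ * ((2 * Real.sin (φ / 2)) ^ (-β) - (2 : ℝ) ^ (-β))

/-- `K₁(α,β,φ;s)`. -/
def K1f (α β φ s : ℝ) : ℝ :=
  (s ^ 2)⁻¹ *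
    ((s / (Real.exp s - 1)) ^ β * ((Real.exp s + 1) ^ α - Rker s φ ^ α) /
        ((2 : ℝ) ^ α - (2 * Real.sin (φ / 2)) ^ α) - 1 - (α - β) / 2 * s)

/-- `K₂(α,β,φ;s)`. -/
def K2f (α β φ s : ℝ) : ℝ :=
  (s ^ 2)⁻¹ *
    (((Real.exp s - 1) / s) ^ α * (Rker s φ ^ (-β) - (Real.exp s + 1) ^ (-β)) /
        ((2 * Real.sin (φ / 2)) ^ (-β) - (2 : ℝ) ^ (-β)) - 1 - (α - β) / 2 * s)

/-- `A₁(α,φ)`. -/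
def A1f (α φ : ℝ) : ℝ :=
  (1 - α) * ((2 : ℝ) ^ α - (2 * Real.sin (φ / 2)) ^ α) /
    (Real.sin (π * α) * Real.Gamma (1 + α) * (π - φ) ^ 2)

/-- `A₂(α,β,φ)`. -/
def A2f (α β φ : ℝ) : ℝ :=
  (1 - α) * Real.Gamma β * ((2 * Real.sin (φ / 2)) ^ (-β) - (2 : ℝ) ^ (-β)) /
    (π * (π - φ) ^ 2)

/-- `L(α,β,φ;s)`. -/
def Lf (α β φ s : ℝ) : ℝ :=
  s ^ 2 / (α + β) *
    (A1f α φ * K1f α β φ s / (Real.Gamma (1 - β) * s ^ β) -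
      s ^ α * A2f α β φ * K2f α β φ s / Real.Gamma (1 + α))

/-- `E₀(α,β,φ;n)`. -/
def E0f (α β φ : ℝ) (n : ℕ) : ℝ :=
  (n : ℝ) ^ (1 + α - β) * ∫ s in (0:ℝ)..1, Lf α β φ s * Real.exp (-(n : ℝ) * s)

/-- `E∞(α,β,φ;n)`. -/
def EInf (α β φ : ℝ) (n : ℕ) : ℝ :=
  (n : ℝ) ^ (1 + α - β) * ∫ s in Set.Ioi (1:ℝ), Lf α β φ s * Real.exp (-(n : ℝ) * s)

/-- Upper incomplete Gamma function `Γ(a,x) = ∫_x^∞ t^{a-1} e^{-t} dt`. -/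
def iGamma (a x : ℝ) : ℝ := ∫ t in Set.Ioi x, t ^ (a - 1) * Real.exp (-t)

/-- `𝓗(α,β,φ;n)`. -/
def Hf (α β φ : ℝ) (n : ℕ) : ℝ :=
  (1 - α) * (n : ℝ) ^ (1 + α - β) * hFun α β φ n /
    ((α + β) * Real.sin (π * α) * Real.sin (π * β) * Real.Gamma (1 - β) * Real.Gamma (1 + α))

/-- `𝓗⁽²⁾(α,β,φ;n)`. -/
def H2f (α β φ : ℝ) (n : ℕ) : ℝ :=
  (α + β)⁻¹ *
    (A1f α φ * (n : ℝ) ^ α * (1 + (α - β) * (1 - β) / (2 * n)) -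
      A2f α β φ * (n : ℝ) ^ (-β) * (1 + (α - β) * (1 + α) / (2 * n)))

/-- `P_n(α,β,φ;μ₀,μ∞)` for real `n > 0`. -/
def Pf (n α β φ μ0 μi : ℝ) : ℝ :=
  (α + β)⁻¹ *
      (A1f α φ * n ^ α * (1 + (α - β) * (1 - β) / (2 * n)) -
        A2f α β φ * n ^ (-β) * (1 + (α - β) * (1 + α) / (2 * n))) -
    μ0 * Real.Gamma (2 - β) * n ^ (α - 1) - μi * iGamma (3 + α) n * n ^ (-2 - β)

/-- `Q_n(α,β,φ)` for real `n > 0`. -/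
def Qf (n α β φ : ℝ) : ℝ :=
  π * (α + β) * Real.sin (π * α) * Real.Gamma (1 + α) * (π - φ) ^ 2 /
    ((1 - α) * Real.Gamma β * n ^ (1 + α - β))

/-- `F₁(α,β,φ)`. -/
def F1f (α β φ : ℝ) : ℝ :=
  (α + β)⁻¹ * (A1f α φ - max (1 - (α + β)) 0 * (5 : ℝ) ^ (-(α + β)) * A2f α β φ)

/-- `F₂(α,β,φ)`. -/
def F2f (α β φ : ℝ) : ℝ :=
  (α + β)⁻¹ *
    (A1f α φ -
      (5 : ℝ) ^ (-(α + β)) * (|1 - (α + β)| + (α + β) * |(α - β) * (1 + α) / 2| / 5) * A2f α β φ)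

/-- `J(α,β,φ;μ₀,μ∞;n)` for real `n > 0`. -/
def Jf (α β φ μ0 μi : ℝ) (n : ℝ) : ℝ :=
  (α + β)⁻¹ * A1f α φ * (n + (α - β) * (1 - β) / 2) -
    (α + β)⁻¹ * n ^ (-(α + β)) * A2f α β φ * (n + (α - β) * (1 + α) / 2) -
    μ0 * Real.Gamma (2 - β) - μi * iGamma (3 + α) n * n ^ (-1 - (α + β))


lemma pochh_succ (a : ℝ) (k : ℕ) : pochh a (k+1) = pochh a k * (a + k) :=
  Finset.prod_range_succ _ _

lemma pochh_nonneg {a : ℝ} (ha : 0 ≤ a) (k : ℕ) : 0 ≤ pochh a k :=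
  Finset.prod_nonneg fun j _ => add_nonneg ha (Nat.cast_nonneg j)

lemma pochh_pos {a : ℝ} (ha : 0 < a) (k : ℕ) : 0 < pochh a k :=
  Finset.prod_pos fun j _ => add_pos_of_pos_of_nonneg ha (Nat.cast_nonneg j)

lemma pochh_neg_eq (α : ℝ) (k : ℕ) :
    pochh (-α) k = (-1)^k * ∏ j ∈ Finset.range k, (α - (j:ℝ)) := by
  unfold pochh
  calc ∏ j ∈ Finset.range k, (-α + (j:ℝ))
      = ∏ j ∈ Finset.range k, ((-1) * (α - (j:ℝ))) :=
        Finset.prod_congr rfl (fun j _ => by ring)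
    _ = (-1)^k * ∏ j ∈ Finset.range k, (α - (j:ℝ)) := by
        rw [Finset.prod_mul_distrib, Finset.prod_const, Finset.card_range]

lemma vand (a b : ℝ) (n : ℕ) :
    ∑ k ∈ Finset.range (n+1), (n.choose k : ℝ) * (pochh a k * pochh b (n - k))
      = pochh (a + b) n := by
  induction n with
  | zero => simp [pochh]
  | succ n ih =>
    rw [Finset.sum_range_succ']
    have h0 : ((n+1).choose 0 : ℝ) * (pochh a 0 * pochh b (n+1-0)) = pochh b (n+1) := by
      simp [pochh]
    rw [h0]
    have hsplit : ∀ i ∈ Finset.range (n+1),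
        ((n+1).choose (i+1) : ℝ) * (pochh a (i+1) * pochh b (n+1-(i+1)))
          = (n.choose i : ℝ) * (pochh a (i+1) * pochh b (n-i))
            + (n.choose (i+1) : ℝ) * (pochh a (i+1) * pochh b (n-i)) := by
      intro i _
      rw [Nat.choose_succ_succ']
      push_cast
      ring
    rw [Finset.sum_congr rfl hsplit, Finset.sum_add_distrib]
    -- second sum plus pochh b (n+1) reassembles to ∑_{k∈range(n+1)} g k
    have hre : (∑ i ∈ Finset.range (n+1), (n.choose (i+1) : ℝ) * (pochh a (i+1) * pochh b (n-i)))
          + pochh b (n+1)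
        = ∑ k ∈ Finset.range (n+1), (n.choose k : ℝ) * (pochh a k * pochh b (n+1-k)) := by
      have := (Finset.sum_range_succ' (fun k => (n.choose k : ℝ) * (pochh a k * pochh b (n+1-k))) (n+1)).symm
      rw [Finset.sum_range_succ (fun k => (n.choose k : ℝ) * (pochh a k * pochh b (n+1-k))) (n+1)]
        at this
      simp only [Nat.choose_succ_self, Nat.cast_zero, zero_mul, add_zero] at this
      simpa [pochh] using this
    rw [add_assoc, hre]
    have hterm : ∀ k ∈ Finset.range (n+1),
        (n.choose k : ℝ) * (pochh a k * pochh b (n+1-k))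
          + (n.choose k : ℝ) * (pochh a (k+1) * pochh b (n-k))
        = (a + b + n) * ((n.choose k : ℝ) * (pochh a k * pochh b (n-k))) := by
      intro k hk
      have hk' : k ≤ n := Nat.lt_succ_iff.mp (Finset.mem_range.mp hk)
      have h1 : n + 1 - k = (n - k) + 1 := by omega
      have hc : ((n - k : ℕ) : ℝ) = (n : ℝ) - k := by
        push_cast [Nat.cast_sub hk']; ring
      rw [h1, pochh_succ, pochh_succ, hc]
      ring
    rw [add_comm, ← Finset.sum_add_distrib,
        Finset.sum_congr rfl hterm, ← Finset.mul_sum, ih, pochh_succ]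
    ring

lemma gamma_pochh {x : ℝ} (hx : 0 < x) (m : ℕ) :
    Real.Gamma (x + m) = pochh x m * Real.Gamma x := by
  induction m with
  | zero => simp [pochh]
  | succ m ih =>
    have hne : x + (m:ℝ) ≠ 0 := by positivity
    have : x + ((m:ℕ)+1 : ℕ) = (x + m) + 1 := by push_cast; ring
    rw [this, Real.Gamma_add_one hne, ih, pochh_succ]
    ring


lemma genBinom_odd_nonneg {α : ℝ} (h0 : 0 < α) (h1 : α < 1) {k : ℕ} (hk : Odd k) :
    0 ≤ genBinom α k := by
  obtain ⟨m, hm⟩ := hk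
  apply div_nonneg _ (by positivity)
  subst hm
  rw [show 2*m+1 = (2*m)+1 from rfl, Finset.prod_range_succ' (fun j => α - (j:ℝ)) (2*m)]
  have h2 : ∏ i ∈ Finset.range (2*m), (α - ((i+1 : ℕ):ℝ))
      = ∏ i ∈ Finset.range (2*m), ((-1) * (((i:ℝ)+1) - α)) := by
    apply Finset.prod_congr rfl; intro i _; push_cast; ring
  rw [h2, Finset.prod_mul_distrib, Finset.prod_const, Finset.card_range]
  simp only [Nat.cast_zero, sub_zero, pow_mul, neg_one_sq, one_pow, one_mul]
  apply mul_nonneg (Finset.prod_nonneg fun i _ => ?_) h0.le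
  have : (0:ℝ) ≤ (i:ℝ) := Nat.cast_nonneg i
  linarith

lemma brAR_neg_one {α β : ℝ} (h0 : 0 < α) (hab : α ≤ β) (n : ℕ) :
    brAR α β (-1) n = pochh (β - α) n / Nat.factorial n := by
  have hnfac : (Nat.factorial n : ℝ) ≠ 0 := by positivity
  rw [eq_div_iff hnfac, ← show (-α) + β = β - α by ring, ← vand (-α) β n, brAR,
      Finset.sum_mul]
  apply Finset.sum_congr rfl
  intro k hk
  have hk' : k ≤ n := Nat.lt_succ_iff.mp (Finset.mem_range.mp hk)
  have hfac : ((n.choose k : ℕ) : ℝ) * (Nat.factorial k) * (Nat.factorial (n-k))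
      = (Nat.factorial n) := by exact_mod_cast Nat.choose_mul_factorial_mul_factorial hk'
  have hkf : (Nat.factorial k : ℝ) ≠ 0 := by positivity
  have hnkf : (Nat.factorial (n-k) : ℝ) ≠ 0 := by positivity
  rw [genBinom, pochh_neg_eq]
  field_simp
  linarith [congrArg (fun t : ℝ => t * ((∏ j ∈ Finset.range k, (α - (j:ℝ))) * pochh β (n-k))) hfac,
    mul_comm ((n.choose k : ℝ)) ((-1:ℝ)^k)]

/-- For `0 < α ≤ β < 1`, `A_n(α,β,1) > |A_n(α,β,-1)|`; moreover for `α < β`,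
`A_n(α,β,-1) = Γ(n-α+β)/(Γ(β-α) n!) ≥ 0`. -/
theorem statement19 (α β : ℝ) (h0 : 0 < α) (hab : α ≤ β) (hb1 : β < 1)
    (n : ℕ) (hn : 1 ≤ n) :
    |brAR α β (-1) n| < brAR α β 1 n ∧
      (α < β →
        brAR α β (-1) n = Real.Gamma ((n : ℝ) - α + β) / (Real.Gamma (β - α) * Nat.factorial n) ∧
          0 ≤ brAR α β (-1) n) := by
  have ha1 : α < 1 := lt_of_le_of_lt hab hb1
  have key := brAR_neg_one h0 hab n
  have hAneg : 0 ≤ brAR α β (-1) n := by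
    rw [key]
    exact div_nonneg (pochh_nonneg (by linarith) n) (by positivity)
  have hdiff : 0 < brAR α β 1 n - brAR α β (-1) n := by
    rw [brAR, brAR, ← Finset.sum_sub_distrib]
    have heq : ∀ k ∈ Finset.range (n+1),
        genBinom α k * (pochh β (n - k) / Nat.factorial (n - k)) * (1:ℝ) ^ k -
          genBinom α k * (pochh β (n - k) / Nat.factorial (n - k)) * (-1) ^ k
        = genBinom α k * (pochh β (n - k) / Nat.factorial (n - k)) * (1 - (-1)^k) := by
      intro k _; rw [one_pow]; ring
    rw [Finset.sum_congr rfl heq]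
    apply Finset.sum_pos'
    · intro k _
      rcases Nat.even_or_odd k with he | ho
      · rw [he.neg_one_pow]; simp
      · rw [ho.neg_one_pow]
        have h2 : (1:ℝ) - (-1) = 2 := by norm_num
        rw [h2]
        have := genBinom_odd_nonneg h0 ha1 ho
        have hp : 0 ≤ pochh β (n-k) / Nat.factorial (n-k) :=
          div_nonneg (pochh_nonneg (by linarith) _) (by positivity)
        positivity
    · refine ⟨1, Finset.mem_range.mpr (by omega), ?_⟩
      have hg1 : genBinom α 1 = α := by simp [genBinom]
      rw [hg1]
      have hp : 0 < pochh β (n-1) / Nat.factorial (n-1) :=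
        div_pos (pochh_pos (by linarith) _) (by positivity)
      have : ((-1:ℝ))^1 = -1 := by norm_num
      rw [this]
      nlinarith
  refine ⟨by rw [abs_of_nonneg hAneg]; linarith, fun hlt => ?_⟩
  refine ⟨?_, hAneg⟩
  have hba : 0 < β - α := by linarith
  have hg : Real.Gamma ((n:ℝ) - α + β) = pochh (β - α) n * Real.Gamma (β - α) := by
    rw [show (n:ℝ) - α + β = (β - α) + n by ring]
    exact gamma_pochh hba n
  have hgne : Real.Gamma (β - α) ≠ 0 := (Real.Gamma_pos_of_pos hba).ne'
  rw [key, hg]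
  field_simp

end
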